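/- Let x > 0 be a real number and define E_x: ℝ → ℝ by E_x(r) = (1/2)·(cosh(2r) − 1) + 18·x²·e^{−2r}. Then E_x attains its global minimum over ℝ at the unique point r* = (1/4)·log(72·x² + 1), and the minimum value is E_x(r*) = (1/2)·((36·x² + 1)/√(72·x² + 1) − 1) + 18·x²/√(72·x² + 1). -/
import Mathlib


/-- For `x > 0`, the mean photon number
`E_x(r) = (1/2)(cosh(2r) − 1) + 18x²e^{−2r}` attains its global minimum at the unique
point `r* = (1/4)·log(72x² + 1)`, with minimum value
`E_x(r*) = (1/2)·((36x² + 1)/√(72x² + 1) − 1) + 18x²/√(72x² + 1)`. -/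
theorem cubic_phase_state_minimal_mean_photon_number
    (x : ℝ) (hx : 0 < x) (E : ℝ → ℝ)
    (hE : ∀ r, E r = (1/2) * (Real.cosh (2 * r) - 1) + 18 * x ^ 2 * Real.exp (-(2 * r)))
    (rstar : ℝ) (hrstar : rstar = (1/4) * Real.log (72 * x ^ 2 + 1)) :
    (∀ r, E rstar ≤ E r) ∧ (∀ r, r ≠ rstar → E rstar < E r) ∧
      E rstar = (1/2) * ((36 * x ^ 2 + 1) / Real.sqrt (72 * x ^ 2 + 1) - 1)
        + 18 * x ^ 2 / Real.sqrt (72 * x ^ 2 + 1) := by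
  set s := Real.sqrt (72 * x ^ 2 + 1) with hsdef
  have h1 : (0:ℝ) < 72 * x ^ 2 + 1 := by positivity
  have hspos : 0 < s := Real.sqrt_pos.mpr h1
  have hs2 : s ^ 2 = 72 * x ^ 2 + 1 := Real.sq_sqrt h1.le
  have hexp : Real.exp (2 * rstar) = s := by
    rw [hsdef, Real.sqrt_eq_rpow, Real.rpow_def_of_pos h1, hrstar]
    ring_nf
  have key : ∀ r, E r = (Real.exp (2*r) - s)^2 / (4 * Real.exp (2*r)) + (s/2 - 1/2) := by
    intro r
    have ht : (0:ℝ) < Real.exp (2*r) := Real.exp_pos _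
    rw [hE, Real.cosh_eq, Real.exp_neg]
    field_simp
    ring_nf
    nlinarith [hs2, ht]
  have hEstar : E rstar = s/2 - 1/2 := by
    rw [key, hexp]
    simp
  have hle : ∀ r, E rstar ≤ E r := by
    intro r
    rw [hEstar, key]
    have ht : (0:ℝ) < Real.exp (2*r) := Real.exp_pos _
    have : 0 ≤ (Real.exp (2*r) - s)^2 / (4 * Real.exp (2*r)) := by positivity
    linarith
  refine ⟨hle, ?_, ?_⟩
  · intro r hr
    rw [hEstar, key]
    have ht : (0:ℝ) < Real.exp (2*r) := Real.exp_pos _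
    have hne : Real.exp (2*r) ≠ s := by
      rw [← hexp]
      intro h
      exact hr (by linarith [Real.exp_injective h])
    have hsq : 0 < (Real.exp (2*r) - s)^2 :=
      lt_of_le_of_ne (sq_nonneg _) (Ne.symm (pow_ne_zero _ (sub_ne_zero.mpr hne)))
    have hpos : 0 < (Real.exp (2*r) - s)^2 / (4 * Real.exp (2*r)) :=
      div_pos hsq (by linarith)
    linarith
  · rw [hEstar]
    field_simp
    nlinarith [hs2]
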